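/- If K ⊆ Σ^{≤ω} is a language of finite and infinite words whose right congruence (u ~ u' iff for all x ∈ Σ^{≤ω}, ux ∈ K ⟺ u'x ∈ K) has finite index, and K' is obtained from K by complementation, union with a regular language, or inverse image under a homomorphism h : Γ^{≤ω} → Σ^{≤ω} induced by a letter map Γ → Σ*, then K' also has a finite-index right congruence. -/

import Mathlib

open Filter

variable {A : Type*}

/-- The interval coded by `p` occupies positions `p.1, …, p.1 + p.2 - 1` (length `p.2 > 0`). -/
def IntervalLt (p q : ℕ × ℕ) : Prop := p.1 + p.2 ≤ q.1

def IntervalDisj (p q : ℕ × ℕ) : Prop := p.1 + p.2 ≤ q.1 ∨ q.1 + q.2 ≤ p.1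

def prefixList (u : ℕ → List A) (m : ℕ) : List A := (List.range m).flatMap u

/-- Prepending a finite word to an ω-word. -/
def prepend (w : List A) (x : ℕ → A) : ℕ → A := fun n =>
  if h : n < w.length then w.get ⟨n, h⟩ else x (n - w.length)

open Classical in
/-- The infinite concatenation `u 0 · u 1 · u 2 ⋯` of a sequence of finite words, as an
ω-word; meaningful when infinitely many of the `u i` are nonempty. -/
noncomputable def omegaConcat [Inhabited A] (u : ℕ → List A) : ℕ → A := fun n =>
  if h : ∃ m, n < (prefixList u m).length
  then (prefixList u (Nat.find h)).getD n default
  else default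

/-- The ω-power `v^ω` of a finite word; meaningful when `v ≠ []`. -/
noncomputable def omegaPow [Inhabited A] (v : List A) : ℕ → A := fun n =>
  v.getD (n % v.length) default

/-- Infinitely many of the words `u i` are nonempty. -/
def InfOftenNonempty (u : ℕ → List A) : Prop := ∀ n, ∃ m, n ≤ m ∧ u m ≠ []

/-- A relation on finite words has finite index (finitely many classes). -/
def FiniteIndex (r : List A → List A → Prop) : Prop :=
  (Set.range fun w => {v | r w v}).Finite

/-- Compatibility with concatenation. -/
def ConcatCongr (r : List A → List A → Prop) : Prop :=
  ∀ u₁ u₁' u₂ u₂' : List A, r u₁ u₁' → r u₂ u₂' → r (u₁ ++ u₂) (u₁' ++ u₂')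

/-- The relation `r` recognizes `L`: relating the blocks of two infinite concatenations
pointwise preserves membership in `L`. -/
def Recognizes [Inhabited A] (r : List A → List A → Prop) (L : Set (ℕ → A)) : Prop :=
  ∀ u u' : ℕ → List A, InfOftenNonempty u → InfOftenNonempty u' →
    (∀ i, r (u i) (u' i)) → (omegaConcat u ∈ L ↔ omegaConcat u' ∈ L)

/-- Nondeterministic Büchi automaton. -/
structure BuchiAutomaton (A : Type*) where
  Q : Type
  finQ : Finite Q
  init : Set Q
  step : Q → A → Set Q
  acc : Set Q

def BuchiAutomaton.Accepts (M : BuchiAutomaton A) (x : ℕ → A) : Prop :=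
  ∃ ρ : ℕ → M.Q, ρ 0 ∈ M.init ∧ (∀ n, ρ (n + 1) ∈ M.step (ρ n) (x n)) ∧
    ∀ n, ∃ m, n ≤ m ∧ ρ m ∈ M.acc

def OmegaRegular (L : Set (ℕ → A)) : Prop :=
  ∃ M : BuchiAutomaton A, ∀ x, x ∈ L ↔ M.Accepts x

/-- ω-words over `{a, b}` (with `a = true`, `b = false`) of the form `a^{k₁} b a^{k₂} b ⋯`
whose blocks of `a`'s have unbounded size. -/
def Uset : Set (ℕ → Bool) :=
  {x | (∀ n, ∃ m, n ≤ m ∧ x m = false) ∧ ∀ n, ∃ k, ∀ i < n, x (k + i) = true}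

/-- Words of length at most ω: finite words or ω-words. -/
def WordLE (A : Type*) := List A ⊕ (ℕ → A)

/-- Prepending a finite word to a word of length `≤ ω`. -/
def appendLE (u : List A) : WordLE A → WordLE A
  | .inl w => .inl (u ++ w)
  | .inr x => .inr (prepend u x)

/-- The right congruence of a language of words of length `≤ ω`. -/
def RightEqLE (K : Set (WordLE A)) (u u' : List A) : Prop :=
  ∀ x : WordLE A, appendLE u x ∈ K ↔ appendLE u' x ∈ K

/-- Regular languages of words of length `≤ ω`: a regular language of finite words
together with an ω-regular language. -/
def RegularLE (R : Set (WordLE A)) : Prop :=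
  ∃ (Rfin : Language A) (Romega : Set (ℕ → A)),
    Rfin.IsRegular ∧ OmegaRegular Romega ∧
    R = Sum.inl '' (Rfin : Set (List A)) ∪ Sum.inr '' Romega

open Classical in
/-- The homomorphism of words of length `≤ ω` induced by the letter map `h : Γ → Σ*`.
The image of an ω-word is an ω-word if infinitely many letters have nonempty image,
and a finite word otherwise. -/
noncomputable def homExt {Γ : Type*} [Inhabited A] (h : Γ → List A) :
    WordLE Γ → WordLE A
  | .inl w => .inl (w.flatMap h)
  | .inr x =>
    if hc : InfOftenNonempty (fun i => h (x i)) then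
      .inr (omegaConcat (fun i => h (x i)))
    else
      .inl (prefixList (fun i => h (x i))
        (Classical.choose (show ∃ n, ∀ m, n ≤ m → h (x m) = [] by
          simpa [InfOftenNonempty, not_forall] using hc)))

section Aux

variable {A : Type*}

/-! ### prepend lemmas -/

lemma prepend_lt (w : List A) (x : ℕ → A) {n : ℕ} (h : n < w.length) :
    prepend w x n = w.get ⟨n, h⟩ := by
  simp [prepend, h]

lemma prepend_ge (w : List A) (x : ℕ → A) {n : ℕ} (h : w.length ≤ n) :
    prepend w x n = x (n - w.length) := by
  simp [prepend, Nat.not_lt.mpr h]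

lemma prepend_add (w : List A) (x : ℕ → A) (n : ℕ) :
    prepend w x (w.length + n) = x n := by
  rw [prepend_ge w x (Nat.le_add_right _ _)]
  congr 1
  omega

lemma prepend_nil (x : ℕ → A) : prepend ([] : List A) x = x := by
  funext n
  simp [prepend]

lemma prepend_cons_zero (a : A) (w : List A) (x : ℕ → A) :
    prepend (a :: w) x 0 = a := by
  simp [prepend]

lemma prepend_cons (a : A) (w : List A) (x : ℕ → A) (n : ℕ) :
    prepend (a :: w) x (n + 1) = prepend w x n := by
  by_cases h : n < w.length
  · rw [prepend_lt _ _ (by simpa using Nat.succ_lt_succ h), prepend_lt _ _ h]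
    rfl
  · rw [prepend_ge _ _ (by simp only [List.length_cons]; omega), prepend_ge _ _ (by omega)]
    congr 1
    simp only [List.length_cons]
    omega

/-! ### prefixList lemmas -/

lemma prefixList_zero (u : ℕ → List A) : prefixList u 0 = [] := rfl

lemma prefixList_succ (u : ℕ → List A) (m : ℕ) :
    prefixList u (m + 1) = prefixList u m ++ u m := by
  simp [prefixList, List.range_succ]

lemma prefixList_add (u : ℕ → List A) (k m : ℕ) :
    prefixList u (k + m) = prefixList u k ++ prefixList (fun i => u (k + i)) m := by
  induction m with
  | zero => simp [prefixList_zero]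
  | succ m ih =>
      rw [← Nat.add_assoc, prefixList_succ, ih, prefixList_succ, List.append_assoc]

lemma prefixList_prefix (u : ℕ → List A) {m m' : ℕ} (h : m ≤ m') :
    prefixList u m <+: prefixList u m' := by
  obtain ⟨k, rfl⟩ := Nat.exists_eq_add_of_le h
  rw [prefixList_add]
  exact List.prefix_append _ _

lemma prefixList_stab (u : ℕ → List A) {n : ℕ} (h : ∀ m, n ≤ m → u m = []) {m : ℕ}
    (hm : n ≤ m) : prefixList u m = prefixList u n := by
  obtain ⟨k, rfl⟩ := Nat.exists_eq_add_of_le hm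
  clear hm
  induction k with
  | zero => rfl
  | succ k ih =>
      rw [show n + (k + 1) = (n + k) + 1 from by omega, prefixList_succ, h _ (by omega),
        List.append_nil, ih]

lemma length_prefixList_unbounded {u : ℕ → List A} (hu : InfOftenNonempty u) (n : ℕ) :
    ∃ m, n < (prefixList u m).length := by
  induction n with
  | zero =>
      obtain ⟨m, -, hm⟩ := hu 0
      refine ⟨m + 1, ?_⟩
      rw [prefixList_succ]
      have : 0 < (u m).length := List.length_pos_iff.mpr hm
      simp only [List.length_append]
      omega
  | succ n ih =>
      obtain ⟨m, hm⟩ := ih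
      obtain ⟨m', hmm', hm'⟩ := hu m
      refine ⟨m' + 1, ?_⟩
      have hpfx := (prefixList_prefix u hmm').length_le
      rw [prefixList_succ]
      have : 0 < (u m').length := List.length_pos_iff.mpr hm'
      simp only [List.length_append]
      omega

/-! ### omegaConcat lemmas -/

lemma omegaConcat_eq [Inhabited A] (u : ℕ → List A) {m n : ℕ}
    (hn : n < (prefixList u m).length) :
    omegaConcat u n = (prefixList u m).getD n default := by
  have hex : ∃ m, n < (prefixList u m).length := ⟨m, hn⟩
  rw [omegaConcat, dif_pos hex]
  have h1 : n < (prefixList u (Nat.find hex)).length := Nat.find_spec hex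
  have h2 : Nat.find hex ≤ m := Nat.find_min' hex hn
  have hpfx : prefixList u (Nat.find hex) <+: prefixList u m := prefixList_prefix u h2
  rw [List.getD_eq_getElem _ _ h1, List.getD_eq_getElem _ _ hn]
  exact hpfx.getElem h1

/-! ### homExt and appendLE -/

lemma infOften_prepend_iff {Γ : Type*} (h : Γ → List A) (u : List Γ) (y : ℕ → Γ) :
    InfOftenNonempty (fun i => h (prepend u y i)) ↔ InfOftenNonempty (fun i => h (y i)) := by
  constructor
  · intro hc n
    obtain ⟨m, hm, hne⟩ := hc (n + u.length)
    refine ⟨m - u.length, by omega, ?_⟩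
    show h (y (m - u.length)) ≠ []
    have hne' : h (prepend u y m) ≠ [] := hne
    rwa [prepend_ge u y (by omega)] at hne'
  · intro hc n
    obtain ⟨m, hm, hne⟩ := hc n
    refine ⟨u.length + m, by omega, ?_⟩
    show h (prepend u y (u.length + m)) ≠ []
    rw [prepend_add]
    exact hne

lemma prefixList_prepend_len {Γ : Type*} (h : Γ → List A) (u : List Γ) (y : ℕ → Γ) :
    prefixList (fun i => h (prepend u y i)) u.length = u.flatMap h := by
  induction u with
  | nil => rfl
  | cons a u ih =>
      have hshift : ∀ (v : ℕ → List A) (n : ℕ),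
          prefixList v (n + 1) = v 0 ++ prefixList (fun i => v (i + 1)) n := by
        intro v n
        induction n with
        | zero => simp [prefixList_succ, prefixList_zero]
        | succ n ihn =>
            rw [prefixList_succ, ihn, prefixList_succ, List.append_assoc]
      show prefixList (fun i => h (prepend (a :: u) y i)) (u.length + 1) = _
      rw [hshift]
      simp only [prepend_cons_zero, prepend_cons]
      rw [ih]
      rfl

lemma prefixList_prepend_shift {Γ : Type*} (h : Γ → List A) (u : List Γ) (y : ℕ → Γ) (m : ℕ) :
    prefixList (fun i => h (prepend u y i)) (u.length + m)
      = u.flatMap h ++ prefixList (fun i => h (y i)) m := by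
  rw [prefixList_add, prefixList_prepend_len]
  congr 1
  have he : (fun i => h (prepend u y (u.length + i))) = fun i => h (y i) := by
    funext i
    rw [prepend_add]
  exact congrArg (fun v => prefixList v m) he

lemma omegaConcat_prepend [Inhabited A] {Γ : Type*} (h : Γ → List A) (u : List Γ) (y : ℕ → Γ)
    (hc : InfOftenNonempty fun i => h (y i)) :
    omegaConcat (fun i => h (prepend u y i))
      = prepend (u.flatMap h) (omegaConcat fun i => h (y i)) := by
  funext n
  set w := u.flatMap h with hw
  by_cases hn : n < w.length
  · rw [prepend_lt _ _ hn]
    have hlen : n < (prefixList (fun i => h (prepend u y i)) u.length).length := by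
      rwa [prefixList_prepend_len]
    rw [omegaConcat_eq _ hlen, prefixList_prepend_len]
    rw [List.getD_eq_getElem _ _ (by exact hn)]
    rfl
  · push_neg at hn
    rw [prepend_ge _ _ hn]
    obtain ⟨m, hm⟩ := length_prefixList_unbounded hc (n - w.length)
    have hw' : (prefixList (fun i => h (prepend u y i)) (u.length + m))
        = w ++ prefixList (fun i => h (y i)) m := by
      rw [prefixList_prepend_shift, hw]
    have hlen : n < (prefixList (fun i => h (prepend u y i)) (u.length + m)).length := by
      rw [hw', List.length_append]
      omega
    rw [omegaConcat_eq _ hlen, omegaConcat_eq _ hm,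
      List.getD_eq_getElem _ _ hlen, List.getD_eq_getElem _ _ hm]
    simp only [hw']
    rw [List.getElem_append_right hn]

lemma homExt_appendLE [Inhabited A] {Γ : Type*} (h : Γ → List A) (u : List Γ) (x : WordLE Γ) :
    homExt h (appendLE u x) = appendLE (u.flatMap h) (homExt h x) := by
  cases x with
  | inl w => simp [homExt, appendLE]; rfl
  | inr y =>
      by_cases hc : InfOftenNonempty fun i => h (y i)
      · have hc' : InfOftenNonempty fun i => h (prepend u y i) :=
          (infOften_prepend_iff h u y).mpr hc
        show homExt h (.inr (prepend u y)) = _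
        rw [homExt]; erw [dif_pos hc']; rw [omegaConcat_prepend h u y hc]
        show _ = appendLE (u.flatMap h) (homExt h (.inr y))
        rw [homExt]; erw [dif_pos hc]
        rfl
      · have hc' : ¬ InfOftenNonempty fun i => h (prepend u y i) :=
          fun hcc => hc ((infOften_prepend_iff h u y).mp hcc)
        show homExt h (.inr (prepend u y)) = appendLE (u.flatMap h) (homExt h (.inr y))
        rw [homExt]; erw [dif_neg hc']; rw [homExt]; erw [dif_neg hc]
        have he' : ∃ n, ∀ m, n ≤ m → h (prepend u y m) = [] := by
          simpa [InfOftenNonempty, not_forall] using hc'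
        have he : ∃ n, ∀ m, n ≤ m → h (y m) = [] := by
          simpa [InfOftenNonempty, not_forall] using hc
        set N' := Classical.choose he' with hN'
        set N := Classical.choose he with hN
        have hspec' := Classical.choose_spec he'
        have hspec := Classical.choose_spec he
        show Sum.inl (prefixList (fun i => h (prepend u y i)) N')
            = Sum.inl (u.flatMap h ++ prefixList (fun i => h (y i)) N)
        congr 1
        have hstab1 : ∀ m, N' ≤ m → prefixList (fun i => h (prepend u y i)) m
            = prefixList (fun i => h (prepend u y i)) N' := fun m hm =>
          prefixList_stab _ hspec' hm
        have hstab2 : ∀ m, N ≤ m → prefixList (fun i => h (y i)) m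
            = prefixList (fun i => h (y i)) N := fun m hm =>
          prefixList_stab _ hspec hm
        have key : prefixList (fun i => h (prepend u y i)) (max N' (u.length + N))
            = u.flatMap h ++ prefixList (fun i => h (y i)) (max N' (u.length + N) - u.length) := by
          have : max N' (u.length + N) = u.length + (max N' (u.length + N) - u.length) := by omega
          rw [this, prefixList_prepend_shift]
          congr 2
          omega
        rw [← hstab1 _ (Nat.le_max_left _ _), key, hstab2 _ (by omega)]

/-! ### Büchi automaton lemmas -/

def buchiStepSet (M : BuchiAutomaton A) (S : Set M.Q) (a : A) : Set M.Q :=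
  {q | ∃ p ∈ S, q ∈ M.step p a}

def buchiEvalFrom (M : BuchiAutomaton A) (S : Set M.Q) (u : List A) : Set M.Q :=
  u.foldl (buchiStepSet M) S

def BuchiAcceptsFrom (M : BuchiAutomaton A) (q : M.Q) (y : ℕ → A) : Prop :=
  ∃ ρ : ℕ → M.Q, ρ 0 = q ∧ (∀ n, ρ (n + 1) ∈ M.step (ρ n) (y n)) ∧
    ∀ n, ∃ m, n ≤ m ∧ ρ m ∈ M.acc

def BuchiAcceptsVia (M : BuchiAutomaton A) (S : Set M.Q) (x : ℕ → A) : Prop :=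
  ∃ ρ : ℕ → M.Q, ρ 0 ∈ S ∧ (∀ n, ρ (n + 1) ∈ M.step (ρ n) (x n)) ∧
    ∀ n, ∃ m, n ≤ m ∧ ρ m ∈ M.acc

lemma buchiAcceptsVia_prepend (M : BuchiAutomaton A) (u : List A) (y : ℕ → A) (S : Set M.Q) :
    BuchiAcceptsVia M S (prepend u y) ↔
      ∃ q ∈ buchiEvalFrom M S u, BuchiAcceptsFrom M q y := by
  induction u generalizing S with
  | nil =>
      rw [prepend_nil]
      constructor
      · rintro ⟨ρ, h0, hstep, hacc⟩
        exact ⟨ρ 0, h0, ρ, rfl, hstep, hacc⟩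
      · rintro ⟨q, hq, ρ, h0, hstep, hacc⟩
        exact ⟨ρ, h0 ▸ hq, hstep, hacc⟩
  | cons a u ih =>
      have hfold : buchiEvalFrom M S (a :: u) = buchiEvalFrom M (buchiStepSet M S a) u := rfl
      rw [hfold, ← ih]
      constructor
      · rintro ⟨ρ, h0, hstep, hacc⟩
        refine ⟨fun n => ρ (n + 1), ⟨ρ 0, h0, by
          have := hstep 0
          rwa [prepend_cons_zero] at this⟩, ?_, ?_⟩
        · intro n
          have := hstep (n + 1)
          rwa [prepend_cons] at this
        · intro n
          obtain ⟨m, hm, hmem⟩ := hacc (n + 1)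
          refine ⟨m - 1, by omega, ?_⟩
          show ρ (m - 1 + 1) ∈ M.acc
          have hm1 : m - 1 + 1 = m := by omega
          rw [hm1]
          exact hmem
      · rintro ⟨ρ, ⟨p, hp, hp0⟩, hstep, hacc⟩
        refine ⟨fun n => Nat.rec p (fun k _ => ρ k) n, hp, ?_, ?_⟩
        · intro n
          cases n with
          | zero => rw [prepend_cons_zero]; exact hp0
          | succ n => rw [prepend_cons]; exact hstep n
        · intro n
          obtain ⟨m, hm, hmem⟩ := hacc n
          exact ⟨m + 1, by omega, hmem⟩

lemma buchiAccepts_prepend (M : BuchiAutomaton A) (u : List A) (y : ℕ → A) :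
    M.Accepts (prepend u y) ↔ ∃ q ∈ buchiEvalFrom M M.init u, BuchiAcceptsFrom M q y :=
  buchiAcceptsVia_prepend M u y M.init

/-! ### finite index transfer -/

lemma rightEqLE_refl (K : Set (WordLE A)) (u : List A) : RightEqLE K u u :=
  fun _ => Iff.rfl

lemma rel_of_class_eq {K : Set (WordLE A)} {u v : List A}
    (h : {w | RightEqLE K u w} = {w | RightEqLE K v w}) : RightEqLE K u v := by
  have hv : v ∈ {w | RightEqLE K v w} := rightEqLE_refl K v
  rw [← h] at hv
  exact hv

lemma finiteIndex_of_map {β : Type*} (K' : Set (WordLE A)) (f : List A → β)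
    (hfin : (Set.range f).Finite)
    (hr : ∀ u v, f u = f v → RightEqLE K' u v) : FiniteIndex (RightEqLE K') := by
  classical
  have key : ∀ u v : List A, f u = f v →
      {w | RightEqLE K' u w} = {w | RightEqLE K' v w} := by
    intro u v huv
    ext w
    constructor <;> intro hw x
    · exact ((hr u v huv x).symm).trans (hw x)
    · exact (hr u v huv x).trans (hw x)
  set g : β → Set (List A) :=
    fun b => if hb : ∃ u, f u = b then {w | RightEqLE K' (Classical.choose hb) w} else ∅ with hg
  have hfac : (fun u => {w | RightEqLE K' u w}) = g ∘ f := by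
    funext u
    have hb : ∃ v, f v = f u := ⟨u, rfl⟩
    simp only [hg, Function.comp, dif_pos hb]
    exact (key _ _ (Classical.choose_spec hb)).symm
  show Set.Finite _
  rw [show (Set.range fun w => {v | RightEqLE K' w v}) = Set.range (g ∘ f) from by rw [← hfac],
    Set.range_comp]
  exact hfin.image g

end Aux

/-- Finite index of the right congruence is preserved by complementation, union with a
regular language, and inverse images of homomorphisms. -/
theorem statement19 [Inhabited A] (K : Set (WordLE A))
    (hK : FiniteIndex (RightEqLE K)) :
    FiniteIndex (RightEqLE Kᶜ) ∧
    (∀ R : Set (WordLE A), RegularLE R → FiniteIndex (RightEqLE (K ∪ R))) ∧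
    (∀ (Γ : Type) (h : Γ → List A), FiniteIndex (RightEqLE (homExt h ⁻¹' K))) := by
  classical
  have hclassK : (Set.range fun w : List A => {v | RightEqLE K w v}).Finite := hK
  refine ⟨?_, ?_, ?_⟩
  · -- complementation
    apply finiteIndex_of_map Kᶜ (fun u => {v | RightEqLE K u v}) hclassK
    intro u v huv x
    have hx := rel_of_class_eq huv x
    simp only [Set.mem_compl_iff]
    exact not_congr hx
  · -- union with a regular language
    intro R hR
    obtain ⟨Rfin, Romega, hreg, ⟨M, hM⟩, rfl⟩ := hR
    obtain ⟨σ, finσ, D, hD⟩ := hreg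
    haveI := M.finQ
    haveI : Fintype σ := finσ
    apply finiteIndex_of_map _
      (fun u => ({v | RightEqLE K u v}, D.eval u, buchiEvalFrom M M.init u))
    · apply Set.Finite.subset (hclassK.prod (Set.finite_univ.prod Set.finite_univ))
      rintro _ ⟨u, rfl⟩
      exact ⟨⟨u, rfl⟩, trivial, trivial⟩
    · intro u v huv
      simp only [Prod.mk.injEq] at huv
      obtain ⟨h1, h2, h3⟩ := huv
      have hKuv := rel_of_class_eq h1
      have hmeml : ∀ z : List A,
          ((Sum.inl z : WordLE A) ∈ Sum.inl '' (Rfin : Set (List A)) ∨ (Sum.inl z : WordLE A) ∈ Sum.inr '' Romega) ↔ z ∈ Rfin := by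
        intro z; simp
        exact ⟨fun ⟨a, ha, he⟩ => by cases he; exact ha, fun hz => ⟨z, hz, rfl⟩⟩
      have hmemr : ∀ z : ℕ → A,
          ((Sum.inr z : WordLE A) ∈ Sum.inl '' (Rfin : Set (List A)) ∨ (Sum.inr z : WordLE A) ∈ Sum.inr '' Romega)
            ↔ z ∈ Romega := by
        intro z; simp
        rintro ⟨a, -, he⟩; cases he
      intro x
      cases x with
      | inl w =>
          show (Sum.inl (u ++ w) : WordLE A) ∈ _ ↔ (Sum.inl (v ++ w) : WordLE A) ∈ _
          change ((Sum.inl (u ++ w) : WordLE A) ∈ K ∨ ((Sum.inl (u ++ w) : WordLE A) ∈ Sum.inl '' (Rfin : Set (List A)) ∨ (Sum.inl (u ++ w) : WordLE A) ∈ Sum.inr '' Romega)) ↔ ((Sum.inl (v ++ w) : WordLE A) ∈ K ∨ ((Sum.inl (v ++ w) : WordLE A) ∈ Sum.inl '' (Rfin : Set (List A)) ∨ (Sum.inl (v ++ w) : WordLE A) ∈ Sum.inr '' Romega))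
          apply or_congr (hKuv (Sum.inl w))
          rw [hmeml, hmeml, ← hD, DFA.mem_accepts, DFA.mem_accepts]
          show D.evalFrom D.start (u ++ w) ∈ _ ↔ D.evalFrom D.start (v ++ w) ∈ _
          rw [DFA.evalFrom_of_append, DFA.evalFrom_of_append,
            show D.evalFrom D.start u = D.evalFrom D.start v from h2]
      | inr y =>
          show (Sum.inr (prepend u y) : WordLE A) ∈ _ ↔ (Sum.inr (prepend v y) : WordLE A) ∈ _
          change ((Sum.inr (prepend u y) : WordLE A) ∈ K ∨ ((Sum.inr (prepend u y) : WordLE A) ∈ Sum.inl '' (Rfin : Set (List A)) ∨ (Sum.inr (prepend u y) : WordLE A) ∈ Sum.inr '' Romega)) ↔ ((Sum.inr (prepend v y) : WordLE A) ∈ K ∨ ((Sum.inr (prepend v y) : WordLE A) ∈ Sum.inl '' (Rfin : Set (List A)) ∨ (Sum.inr (prepend v y) : WordLE A) ∈ Sum.inr '' Romega))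
          apply or_congr (hKuv (Sum.inr y))
          rw [hmemr, hmemr, hM, hM, buchiAccepts_prepend, buchiAccepts_prepend, h3]
  · -- inverse image under a homomorphism
    intro Γ h
    apply finiteIndex_of_map _ (fun u : List Γ => {v | RightEqLE K (u.flatMap h) v})
    · exact hclassK.subset (by rintro _ ⟨u, rfl⟩; exact ⟨u.flatMap h, rfl⟩)
    · intro u v huv x
      have hKuv := rel_of_class_eq huv
      show homExt h (appendLE u x) ∈ K ↔ homExt h (appendLE v x) ∈ K
      rw [homExt_appendLE, homExt_appendLE]
      exact hKuv (homExt h x)
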